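/- Let T ∈ ℂ^{3×3} be symmetric trace-free and ξ ∈ ℂ³ with ⟨ξ,ξ⟩ := Σ_j ξ_j² ≠ 0. If the matrix equation (1/3)⟨ξ,ξ⟩ T + (1/5)((Tξ) ⊗ ξ + ξ ⊗ (Tξ)) − (2/15)⟨Tξ,ξ⟩ 1₃ = 0 holds, then T = 0. -/
import Mathlib


open Finset

/-- First case of the ℂ-ellipticity proof: if `⟨ξ,ξ⟩ ≠ 0` and the contracted
symbol equation holds, then `T = 0`. -/
theorem stmt6 (T : Matrix (Fin 3) (Fin 3) ℂ) (hsym : T.IsSymm)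
    (htr : Matrix.trace T = 0) (ξ : Fin 3 → ℂ) (hξ : (∑ j, ξ j * ξ j) ≠ 0)
    (h : ∀ i j : Fin 3,
      (1/3 : ℂ) * (∑ l, ξ l * ξ l) * T i j
        + (1/5 : ℂ) * (T.mulVec ξ i * ξ j + ξ i * T.mulVec ξ j)
        - (2/15 : ℂ) * (∑ l, T.mulVec ξ l * ξ l) * (if i = j then (1:ℂ) else 0)
        = 0) :
    T = 0 := by
  set q : ℂ := ∑ j, ξ j * ξ j with hq
  set s : ℂ := ∑ l, T.mulVec ξ l * ξ l with hs
  have key : ∀ i, 8 * q * T.mulVec ξ i + s * ξ i = 0 := by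
    intro i
    have h0 := h i 0; have h1 := h i 1; have h2 := h i 2
    fin_cases i <;>
      simp only [Fin.sum_univ_three, Matrix.mulVec, dotProduct,
        hq, hs, Fin.mk_zero, Fin.mk_one, show (⟨2, by norm_num⟩ : Fin 3) = 2 from rfl,
        Fin.reduceEq, ite_true, ite_false, reduceIte,
        mul_one, mul_zero] at h0 h1 h2 ⊢ <;>
      linear_combination 15 * ξ 0 * h0 + 15 * ξ 1 * h1 + 15 * ξ 2 * h2
  have hs0 : s = 0 := by
    have k0 := key 0; have k1 := key 1; have k2 := key 2
    have h9 : 9 * q * s = 0 := by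
      simp only [Fin.sum_univ_three, hq, hs] at k0 k1 k2 ⊢
      linear_combination ξ 0 * k0 + ξ 1 * k1 + ξ 2 * k2
    have := mul_ne_zero (show (9:ℂ) ≠ 0 by norm_num) hξ
    exact (mul_eq_zero.mp h9).resolve_left this
  have hv : ∀ i, T.mulVec ξ i = 0 := by
    intro i
    have k := key i
    rw [hs0] at k
    have h8 : (8:ℂ) * q ≠ 0 := mul_ne_zero (by norm_num) hξ
    have k' : (8 * q) * T.mulVec ξ i = 0 := by linear_combination k
    exact (mul_eq_zero.mp k').resolve_left h8
  ext i j
  have hij := h i j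
  rw [hs0, hv i, hv j] at hij
  have : (1/3 : ℂ) * q * T i j = 0 := by linear_combination hij
  have hq3 : (1/3 : ℂ) * q ≠ 0 := mul_ne_zero (by norm_num) hξ
  simpa using (mul_eq_zero.mp this).resolve_left hq3
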